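/- Let n ≥ 1, let a_0(n), a_1(n) be real numbers with 2a_0(n) + a_1(n) = 1, let f : [0,1] → ℝ be continuous, and let x ∈ [0,1]. Set σ_n(x) = (2x(1−x)(n−1)(n−2) + 3n + 1)/(2(n+2)²(n+3)). Then |D_n^{M,1}(f;x) − f(x)| ≤ |D_n(f;x) − f(x)| + |(1 + a_1(n))(1/2 − x)|·{ 3·ω₂(f; √σ_n(x)) + (5/((n+2)√σ_n(x)))·ω₁(f; √σ_n(x)) }. -/

import Mathlib

open scoped BigOperators
open Set Filter MeasureTheory

/-- Bernstein fundamental function `p_{n,k}` (vanishes for `k > n` since `choose = 0`). -/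
noncomputable def bp (n k : ℕ) (x : ℝ) : ℝ :=
  (n.choose k : ℝ) * x ^ k * (1 - x) ^ (n - k)

/-- Bernstein fundamental function with integer index, vanishing for negative `k`. -/
noncomputable def bpz (n : ℕ) (k : ℤ) (x : ℝ) : ℝ :=
  if 0 ≤ k then bp n k.toNat x else 0

/-- The classical Bernstein operator `B_n`. -/
noncomputable def Bern (n : ℕ) (f : ℝ → ℝ) (x : ℝ) : ℝ :=
  ∑ k ∈ Finset.range (n + 1), bp n k x * f (k / n)

/-- Modified fundamental function `p_{n,k}^{M,1}` with `a(x,n) = a1*x + a0`. -/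
noncomputable def bpM1 (a0 a1 : ℝ) (n k : ℕ) (x : ℝ) : ℝ :=
  (a1 * x + a0) * bp (n - 1) k x + (a1 * (1 - x) + a0) * bpz (n - 1) ((k : ℤ) - 1) x

/-- The modified Bernstein operator `B_n^{M,1}`. -/
noncomputable def BernM1 (a0 a1 : ℝ) (n : ℕ) (f : ℝ → ℝ) (x : ℝ) : ℝ :=
  ∑ k ∈ Finset.range (n + 1), bpM1 a0 a1 n k x * f (k / n)

/-- Second modified fundamental function `p_{n,k}^{M,2}`. -/
noncomputable def bpM2 (n k : ℕ) (x : ℝ) : ℝ :=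
  ((n : ℝ) / 2 * x ^ 2 + (-1 - (n : ℝ) / 2) * x + 1) * bp (n - 2) k x
    + (n : ℝ) * x * (1 - x) * bpz (n - 2) ((k : ℤ) - 1) x
    + ((n : ℝ) / 2 * x ^ 2 + (-(n : ℝ) / 2 + 1) * x) * bpz (n - 2) ((k : ℤ) - 2) x

/-- The second modified Bernstein operator `B_n^{M,2}`. -/
noncomputable def BernM2 (n : ℕ) (f : ℝ → ℝ) (x : ℝ) : ℝ :=
  ∑ k ∈ Finset.range (n + 1), bpM2 n k x * f (k / n)

/-- The Kantorovich operator `K_n`. -/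
noncomputable def Kan (n : ℕ) (f : ℝ → ℝ) (x : ℝ) : ℝ :=
  ((n : ℝ) + 1) * ∑ k ∈ Finset.range (n + 1),
    bp n k x * ∫ t in ((k : ℝ) / (n + 1))..(((k : ℝ) + 1) / (n + 1)), f t

/-- The modified Kantorovich operator `K_n^{M,1}`. -/
noncomputable def KanM1 (a0 a1 : ℝ) (n : ℕ) (f : ℝ → ℝ) (x : ℝ) : ℝ :=
  ((n : ℝ) + 1) * ∑ k ∈ Finset.range (n + 1),
    bpM1 a0 a1 n k x * ∫ t in ((k : ℝ) / (n + 1))..(((k : ℝ) + 1) / (n + 1)), f t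

/-- The Durrmeyer operator `D_n`. -/
noncomputable def Dur (n : ℕ) (f : ℝ → ℝ) (x : ℝ) : ℝ :=
  ((n : ℝ) + 1) * ∑ k ∈ Finset.range (n + 1),
    bp n k x * ∫ t in (0:ℝ)..1, bp n k t * f t

/-- The modified Durrmeyer operator `D_n^{M,1}`. -/
noncomputable def DurM1 (a0 a1 : ℝ) (n : ℕ) (f : ℝ → ℝ) (x : ℝ) : ℝ :=
  ((n : ℝ) + 1) * ∑ k ∈ Finset.range (n + 1),
    bpM1 a0 a1 n k x * ∫ t in (0:ℝ)..1, bp n k t * f t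

/-- The genuine Bernstein–Durrmeyer operator `U_n`. -/
noncomputable def Gen (n : ℕ) (f : ℝ → ℝ) (x : ℝ) : ℝ :=
  (1 - x) ^ n * f 0 + x ^ n * f 1 +
    ((n : ℝ) - 1) * ∑ k ∈ Finset.Icc 1 (n - 1),
      bp n k x * ∫ t in (0:ℝ)..1, bp (n - 2) (k - 1) t * f t

/-- The modified genuine Bernstein–Durrmeyer operator `U_n^{M,1}`. -/
noncomputable def GenM1 (a0 a1 : ℝ) (n : ℕ) (f : ℝ → ℝ) (x : ℝ) : ℝ :=
  (a1 * x + a0) * (1 - x) ^ (n - 1) * f 0 + (a1 * (1 - x) + a0) * x ^ (n - 1) * f 1 +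
    ((n : ℝ) - 1) * ∑ k ∈ Finset.Icc 1 (n - 1),
      bpM1 a0 a1 n k x * ∫ t in (0:ℝ)..1, bp (n - 2) (k - 1) t * f t

/-- First modulus of continuity on `[0,1]`. -/
noncomputable def omega1 (f : ℝ → ℝ) (δ : ℝ) : ℝ :=
  sSup {y | ∃ s t : ℝ, s ∈ Icc (0:ℝ) 1 ∧ t ∈ Icc (0:ℝ) 1 ∧ |s - t| ≤ δ ∧ y = |f s - f t|}

/-- Second modulus of smoothness on `[0,1]`. -/
noncomputable def omega2 (f : ℝ → ℝ) (δ : ℝ) : ℝ :=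
  sSup {y | ∃ t h : ℝ, 0 < h ∧ h ≤ δ ∧ t - h ∈ Icc (0:ℝ) 1 ∧ t + h ∈ Icc (0:ℝ) 1 ∧
    y = |f (t + h) - 2 * f t + f (t - h)|}

/-- Sup norm on `[0,1]`. -/
noncomputable def supNorm (g : ℝ → ℝ) : ℝ :=
  sSup {y | ∃ t ∈ Icc (0:ℝ) 1, y = |g t|}

lemma bp_nonneg {n k : ℕ} {x : ℝ} (hx : x ∈ Icc (0:ℝ) 1) : 0 ≤ bp n k x := by
  obtain ⟨h0, h1⟩ := hx
  exact mul_nonneg (mul_nonneg (by positivity) (pow_nonneg h0 _)) (pow_nonneg (by linarith) _)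

lemma bp_continuous (n k : ℕ) : Continuous (bp n k) := by
  unfold bp; fun_prop

lemma bp_pascal {n k : ℕ} (hn : 1 ≤ n) (hk : k ≤ n) (x : ℝ) :
    bp n k x = (1 - x) * bp (n-1) k x + x * bpz (n-1) ((k:ℤ)-1) x := by
  obtain ⟨m, rfl⟩ : ∃ m, n = m + 1 := ⟨n-1, by omega⟩
  simp only [Nat.add_sub_cancel]
  cases k with
  | zero =>
    simp only [bpz]
    norm_num [bp]
    ring
  | succ j =>
    have hbpz : bpz m ((j+1:ℕ) - 1) x = bp m j x := by
      have : ((j+1:ℕ) : ℤ) - 1 = (j : ℤ) := by push_cast; ring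
      simp [bpz, this]
    rw [hbpz]
    rcases Nat.lt_or_ge j m with hj | hj
    · unfold bp
      have h1 : m + 1 - (j+1) = (m - (j+1)) + 1 := by omega
      have h2 : m - j = (m - (j+1)) + 1 := by omega
      have hc : (((m+1).choose (j+1)) : ℝ) = m.choose (j+1) + m.choose j := by
        rw [Nat.choose_succ_succ]; push_cast; ring
      rw [h1, hc, h2]; ring
    · have : j = m := le_antisymm (by omega) hj
      subst this
      unfold bp
      simp [Nat.choose_succ_self, Nat.choose_self]
      ring

lemma bp_hasDerivAt {m k : ℕ} (hk : k ≤ m) (t : ℝ) :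
    HasDerivAt (bp (m+1) (k+1)) (((m:ℝ)+1) * (bp m k t - bp m (k+1) t)) t := by
  have he : m + 1 - (k+1) = m - k := by omega
  have hone : HasDerivAt (fun y : ℝ => 1 - y) (-1) t := by
    simpa using (hasDerivAt_id' t).const_sub (1:ℝ)
  have hpow1 : HasDerivAt (fun y : ℝ => y ^ (k+1)) (((k:ℝ)+1) * t ^ k) t := by
    simpa using hasDerivAt_pow (k+1) t
  have hpow2 : HasDerivAt (fun y : ℝ => (1-y) ^ (m-k))
      (((m-k : ℕ) : ℝ) * (1-t) ^ (m-k-1) * (-1)) t := hone.pow (m-k)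
  have hD : HasDerivAt (fun y : ℝ => ((m+1).choose (k+1) : ℝ) * y^(k+1) * (1-y)^(m-k))
      ((((m+1).choose (k+1) : ℝ) * (((k:ℝ)+1) * t ^ k)) * (1-t)^(m-k)
        + (((m+1).choose (k+1) : ℝ) * t^(k+1)) * (((m-k : ℕ) : ℝ) * (1-t) ^ (m-k-1) * (-1))) t := by
    exact (((hpow1.const_mul (((m+1).choose (k+1) : ℝ)))).mul hpow2)
  have hfun : bp (m+1) (k+1) = fun y : ℝ => ((m+1).choose (k+1) : ℝ) * y^(k+1) * (1-y)^(m-k) := by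
    funext y; unfold bp; rw [he]
  rw [hfun]
  convert hD using 1
  unfold bp
  have hc1 : ((m:ℝ)+1) * (m.choose k) = ((m+1).choose (k+1) : ℝ) * ((k:ℝ)+1) := by
    exact_mod_cast Nat.add_one_mul_choose_eq m k
  have hc2 : (m.choose (k+1) : ℝ) * ((m:ℝ)+1) = ((m+1).choose (k+1) : ℝ) * ((m-k : ℕ) : ℝ) := by
    have h2 := Nat.choose_mul_succ_eq m (k+1)
    have h' : (m+1) - (k+1) = m - k := by omega
    rw [h'] at h2
    exact_mod_cast h2
  have he2 : m - (k+1) = m - k - 1 := by omega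
  rw [he2]
  linear_combination (t^k * (1-t)^(m-k)) * hc1 - (t^(k+1) * (1-t)^(m-k-1)) * hc2

lemma bp_zero_at_zero {m k : ℕ} (hk : 1 ≤ k) : bp m k 0 = 0 := by
  unfold bp
  rw [zero_pow (by omega)]; ring

lemma bp_zero_at_one {m k : ℕ} (hk : k < m) : bp m k 1 = 0 := by
  unfold bp
  rw [show (1:ℝ) - 1 = 0 by ring, zero_pow (by omega)]; ring

lemma bp_parts {m k : ℕ} (hk : k + 1 ≤ m) {g g' : ℝ → ℝ}
    (hg : ∀ t, HasDerivAt g (g' t) t) (hg'c : Continuous g') :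
    ∫ t in (0:ℝ)..1, (bp m (k+1) t - bp m k t) * g t
      = (1/((m:ℝ)+1)) * ∫ t in (0:ℝ)..1, bp (m+1) (k+1) t * g' t := by
  obtain ⟨p, rfl⟩ : ∃ p, m = p + 1 := ⟨m - 1, by omega⟩
  have hkp : k ≤ p + 1 := by omega
  have hu : ∀ t ∈ Set.uIcc (0:ℝ) 1, HasDerivAt (bp (p+1+1) (k+1))
      (((p:ℝ)+1+1) * (bp (p+1) k t - bp (p+1) (k+1) t)) t := by
    intro t _
    have := bp_hasDerivAt (m := p+1) (k := k) hkp t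
    convert this using 2 <;> push_cast <;> ring
  have hv : ∀ t ∈ Set.uIcc (0:ℝ) 1, HasDerivAt g (g' t) t := fun t _ => hg t
  have hiu : IntervalIntegrable (fun t => ((p:ℝ)+1+1) * (bp (p+1) k t - bp (p+1) (k+1) t))
      volume 0 1 :=
    ((continuous_const.mul ((bp_continuous _ _).sub (bp_continuous _ _))).intervalIntegrable _ _)
  have hiv : IntervalIntegrable g' volume 0 1 := hg'c.intervalIntegrable _ _
  have H := intervalIntegral.integral_mul_deriv_eq_deriv_mul hu hv hiu hiv
  rw [bp_zero_at_one (by omega), bp_zero_at_zero (by omega)] at H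
  simp only [zero_mul, sub_zero, zero_sub] at H
  have hgc : Continuous g := by
    have : Differentiable ℝ g := fun t => (hg t).differentiableAt
    exact this.continuous
  have hint1 : IntervalIntegrable (fun t => bp (p+1) k t * g t) volume 0 1 :=
    (((bp_continuous _ _).mul hgc).intervalIntegrable _ _)
  have hint2 : IntervalIntegrable (fun t => bp (p+1) (k+1) t * g t) volume 0 1 :=
    (((bp_continuous _ _).mul hgc).intervalIntegrable _ _)
  have hexp : ∫ t in (0:ℝ)..1, ((p:ℝ)+1+1) * (bp (p+1) k t - bp (p+1) (k+1) t) * g t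
      = ((p:ℝ)+1+1) * ((∫ t in (0:ℝ)..1, bp (p+1) k t * g t)
          - ∫ t in (0:ℝ)..1, bp (p+1) (k+1) t * g t) := by
    rw [← intervalIntegral.integral_sub hint1 hint2, ← intervalIntegral.integral_const_mul]
    congr 1; funext t; ring
  rw [hexp] at H
  have hm2 : ((p:ℝ)+1+1) ≠ 0 := by positivity
  have : (∫ t in (0:ℝ)..1, bp (p+1) (k+1) t * g t) - ∫ t in (0:ℝ)..1, bp (p+1) k t * g t
      = (1/((p:ℝ)+1+1)) * ∫ t in (0:ℝ)..1, bp (p+1+1) (k+1) t * g' t := by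
    field_simp
    linarith [H]
  push_cast
  rw [← this, ← intervalIntegral.integral_sub hint2 hint1]
  congr 1; funext t; ring

lemma integral_bp {m k : ℕ} (hk : k ≤ m) :
    ∫ t in (0:ℝ)..1, bp m k t = 1/((m:ℝ)+1) := by
  induction k with
  | zero =>
    have h1 : ∀ t : ℝ, bp m 0 t = (1 - t)^m := by
      intro t; unfold bp; simp
    simp_rw [h1]
    rw [intervalIntegral.integral_comp_sub_left (fun t => t^m) 1]
    norm_num [integral_pow]
  | succ j ih =>
    have hj1 : j + 1 ≤ m := hk
    have H := bp_parts (m := m) (k := j) hj1 (g := fun _ => (1:ℝ)) (g' := fun _ => (0:ℝ))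
      (fun t => hasDerivAt_const t 1) continuous_const
    simp only [mul_one, mul_zero, intervalIntegral.integral_zero] at H
    have hsub : ∫ t in (0:ℝ)..1, (bp m (j+1) t - bp m j t)
        = (∫ t in (0:ℝ)..1, bp m (j+1) t) - ∫ t in (0:ℝ)..1, bp m j t :=
      intervalIntegral.integral_sub ((bp_continuous _ _).intervalIntegrable _ _)
        ((bp_continuous _ _).intervalIntegrable _ _)
    rw [hsub] at H
    have := ih (by omega)
    rw [this] at H
    linarith [H]

lemma bp_sum (m : ℕ) (x : ℝ) : ∑ k ∈ Finset.range (m+1), bp m k x = 1 := by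
  have h := add_pow x (1-x) m
  simp only [add_sub_cancel, one_pow] at h
  conv_rhs => rw [h]
  apply Finset.sum_congr rfl
  intro k _
  unfold bp; ring

/-- Whitney-type estimate: error of the chord interpolant is bounded by second differences. -/
lemma whitney_chord {f : ℝ → ℝ} {W a c : ℝ} (hc : 0 < c)
    (hf : ContinuousOn f (Icc a (a + 2*c)))
    (hW0 : 0 ≤ W)
    (hW : ∀ t k : ℝ, 0 < k → k ≤ c → a ≤ t - k → t + k ≤ a + 2*c →
      |f (t+k) - 2*f t + f (t-k)| ≤ W) :
    ∀ s ∈ Icc a (a + 2*c), |f s - (f a + (f (a+2*c) - f a)/(2*c) * (s - a))| ≤ W := by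
  set L : ℝ → ℝ := fun s => f a + (f (a+2*c) - f a)/(2*c) * (s - a) with hL
  set φ : ℝ → ℝ := fun s => f s - L s with hφ
  have hφa : φ a = 0 := by simp [hφ, hL]
  have hφb : φ (a + 2*c) = 0 := by
    simp only [hφ, hL, add_sub_cancel_left]
    field_simp
    ring
  have hφc : ContinuousOn φ (Icc a (a + 2*c)) := by
    apply hf.sub
    fun_prop
  have hne : (Icc a (a + 2*c)).Nonempty := ⟨a, by constructor <;> nlinarith⟩
  obtain ⟨s', hs'mem, hmax⟩ := isCompact_Icc.exists_isMaxOn hne (hφc.abs)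
  intro s hs
  have hle : |φ s| ≤ |φ s'| := hmax hs
  suffices h : |φ s'| ≤ W by
    calc |f s - L s| = |φ s| := rfl
    _ ≤ |φ s'| := hle
    _ ≤ W := h
  have hsecond : ∀ t k : ℝ, 0 < k → k ≤ c → a ≤ t - k → t + k ≤ a + 2*c →
      |φ (t+k) - 2*φ t + φ (t-k)| ≤ W := by
    intro t k h1 h2 h3 h4
    have : φ (t+k) - 2*φ t + φ (t-k) = f (t+k) - 2*f t + f (t-k) := by
      simp only [hφ, hL]; ring
    rw [this]; exact hW t k h1 h2 h3 h4
  obtain ⟨hs'1, hs'2⟩ := hs'mem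
  have tri : ∀ u v : ℝ, |2*v| ≤ |u| + |u - 2*v| := by
    intro u v
    calc |2*v| = |u - (u - 2*v)| := by congr 1; ring
    _ ≤ |u| + |u - 2*v| := abs_sub _ _
  rcases le_or_gt s' (a + c) with hcase | hcase
  · rcases eq_or_lt_of_le hs'1 with heq | hlt
    · rw [← heq, hφa]; simpa using hW0
    · have hk := hsecond s' (s' - a) (by linarith) (by linarith) (by linarith) (by linarith)
      rw [show s' - (s' - a) = a by ring, hφa, add_zero] at hk
      have h2s : |φ (s' + (s' - a))| ≤ |φ s'| :=
        hmax (by constructor <;> [linarith; linarith])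
      have h2 := tri (φ (s' + (s' - a))) (φ s')
      have habs2 : |2 * φ s'| = 2 * |φ s'| := by rw [abs_mul, abs_two]
      linarith
  · rcases eq_or_lt_of_le hs'2 with heq | hlt
    · rw [heq, hφb]; simpa using hW0
    · have hk := hsecond s' (a + 2*c - s') (by linarith) (by linarith) (by linarith) (by linarith)
      rw [show s' + (a + 2*c - s') = a + 2*c by ring, hφb] at hk
      have hk' : |φ (s' - (a + 2*c - s')) - 2 * φ s'| ≤ W := by
        rw [show φ (s' - (a + 2*c - s')) - 2 * φ s' = 0 - 2*φ s' + φ (s' - (a + 2*c - s')) by ring]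
        exact hk
      have h2s : |φ (s' - (a + 2*c - s'))| ≤ |φ s'| :=
        hmax (by constructor <;> [linarith; linarith])
      have h2 := tri (φ (s' - (a + 2*c - s'))) (φ s')
      have habs2 : |2 * φ s'| = 2 * |φ s'| := by rw [abs_mul, abs_two]
      linarith

/-- Bound on `∫ bp * φ` given a pointwise bound for `φ`. -/
lemma integral_bp_mul_le {m k : ℕ} (hk : k ≤ m) {φ : ℝ → ℝ} {C : ℝ}
    (hφ : ContinuousOn φ (Icc 0 1)) (hφb : ∀ t ∈ Icc (0:ℝ) 1, |φ t| ≤ C) :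
    |∫ t in (0:ℝ)..1, bp m k t * φ t| ≤ C/((m:ℝ)+1) := by
  have h01 : (0:ℝ) ≤ 1 := by norm_num
  have huIcc : Set.uIcc (0:ℝ) 1 = Icc 0 1 := uIcc_of_le h01
  have hint : IntervalIntegrable (fun t => bp m k t * φ t) volume 0 1 := by
    apply ContinuousOn.intervalIntegrable
    rw [huIcc]
    exact ((bp_continuous m k).continuousOn.mul hφ)
  have habs : |∫ t in (0:ℝ)..1, bp m k t * φ t| ≤ ∫ t in (0:ℝ)..1, |bp m k t * φ t| :=
    intervalIntegral.abs_integral_le_integral_abs h01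
  have hmono : ∫ t in (0:ℝ)..1, |bp m k t * φ t| ≤ ∫ t in (0:ℝ)..1, bp m k t * C := by
    apply intervalIntegral.integral_mono_on h01
    · apply ContinuousOn.intervalIntegrable
      rw [huIcc]
      exact ((bp_continuous m k).continuousOn.mul hφ).abs
    · exact ((bp_continuous m k).mul continuous_const).intervalIntegrable _ _
    · intro t ht
      rw [abs_mul, abs_of_nonneg (bp_nonneg ht)]
      exact mul_le_mul_of_nonneg_left (hφb t ht) (bp_nonneg ht)
  have hval : ∫ t in (0:ℝ)..1, bp m k t * C = C/((m:ℝ)+1) := by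
    rw [intervalIntegral.integral_mul_const, integral_bp hk]
    ring
  linarith

set_option maxHeartbeats 1000000 in
/-- Steklov-type smoothing with quantitative error and derivative bounds. -/
lemma exists_smooth_approx {f : ℝ → ℝ} (hf : ContinuousOn f (Icc 0 1)) {δ W1 W2 : ℝ}
    (hδ : 0 < δ) (hδ2 : 2*δ ≤ 1) (hW1 : 0 ≤ W1) (hW2 : 0 ≤ W2)
    (hmem1 : ∀ s t : ℝ, s ∈ Icc (0:ℝ) 1 → t ∈ Icc (0:ℝ) 1 → |s - t| ≤ δ → |f s - f t| ≤ W1)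
    (hmem2 : ∀ t k : ℝ, 0 < k → k ≤ δ → t - k ∈ Icc (0:ℝ) 1 → t + k ∈ Icc (0:ℝ) 1 →
      |f (t+k) - 2*f t + f (t-k)| ≤ W2) :
    ∃ g g' : ℝ → ℝ, (∀ t, HasDerivAt g (g' t) t) ∧ Continuous g' ∧
      (∀ t ∈ Icc (0:ℝ) 1, |f t - g t| ≤ 3/2 * W2) ∧
      (∀ t ∈ Icc (0:ℝ) 1, |g' t| ≤ 2*W1/δ) := by
  have hδ1 : δ ≤ 1/2 := by linarith
  have hδne : δ ≠ 0 := ne_of_gt hδ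
  set B : ℝ := (f (2*δ) - f 0)/(2*δ) with hB
  set B' : ℝ := (f 1 - f (1 - 2*δ))/(2*δ) with hB'
  set fext : ℝ → ℝ := fun t => f (max 0 (min 1 t)) + B * min t 0 + B' * max (t-1) 0 with hfext
  have hclamp : ∀ t : ℝ, max 0 (min 1 t) ∈ Icc (0:ℝ) 1 := by
    intro t
    exact ⟨le_max_left _ _, max_le (by norm_num) (min_le_left _ _)⟩
  have hfextc : Continuous fext := by
    apply Continuous.add
    apply Continuous.add
    · exact hf.comp_continuous (by fun_prop) hclamp
    · fun_prop
    · fun_prop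
  have hfeq : ∀ t ∈ Icc (0:ℝ) 1, fext t = f t := by
    rintro t ⟨h0, h1⟩
    simp only [hfext]
    rw [min_eq_right h1, max_eq_right h0, min_eq_right h0, max_eq_right (by linarith : t - 1 ≤ 0)]
    ring
  have hfneg : ∀ t : ℝ, t ≤ 0 → fext t = f 0 + B * t := by
    intro t ht
    simp only [hfext]
    rw [min_eq_right (by linarith : t ≤ 1), max_eq_left ht, min_eq_left ht,
      max_eq_right (by linarith : t - 1 ≤ 0)]
    ring
  have hfpos : ∀ t : ℝ, 1 ≤ t → fext t = f 1 + B' * (t-1) := by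
    intro t ht
    simp only [hfext]
    rw [min_eq_left ht, max_eq_right (by norm_num : (0:ℝ) ≤ 1), min_eq_right (by linarith : (0:ℝ) ≤ t),
      max_eq_left (by linarith : (0:ℝ) ≤ t - 1)]
    ring
  -- primitives
  set F : ℝ → ℝ := fun y => ∫ s in (0:ℝ)..y, fext s with hFdef
  have hFderiv : ∀ y, HasDerivAt F (fext y) y := fun y =>
    intervalIntegral.integral_hasDerivAt_right (hfextc.intervalIntegrable _ _)
      (hfextc.stronglyMeasurableAtFilter _ _) hfextc.continuousAt
  have hFc : Continuous F := by
    have : Differentiable ℝ F := fun y => (hFderiv y).differentiableAt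
    exact this.continuous
  set G : ℝ → ℝ := fun y => ∫ s in (0:ℝ)..y, F s with hGdef
  have hGderiv : ∀ y, HasDerivAt G (F y) y := fun y =>
    intervalIntegral.integral_hasDerivAt_right (hFc.intervalIntegrable _ _)
      (hFc.stronglyMeasurableAtFilter _ _) hFc.continuousAt
  set g : ℝ → ℝ := fun t => (G (t+δ) - 2*G t + G (t-δ))/δ^2 with hgdef
  set g' : ℝ → ℝ := fun t => (F (t+δ) - 2*F t + F (t-δ))/δ^2 with hg'def
  have hgderiv : ∀ t, HasDerivAt g (g' t) t := by
    intro t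
    have h1 : HasDerivAt (fun t => G (t+δ)) (F (t+δ)) t := by
      simpa [Function.comp_def] using (hGderiv (t+δ)).comp t ((hasDerivAt_id t).add_const δ)
    have h2 : HasDerivAt (fun t => G (t-δ)) (F (t-δ)) t := by
      simpa [Function.comp_def] using (hGderiv (t-δ)).comp t ((hasDerivAt_id t).sub_const δ)
    have h3 : HasDerivAt (fun t => G (t+δ) - 2*G t + G (t-δ))
        (F (t+δ) - 2*F t + F (t-δ)) t := by
      exact (h1.sub ((hGderiv t).const_mul 2)).add h2
    simpa [hgdef, hg'def, div_eq_mul_inv] using h3.div_const (δ^2)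
  have hg'c : Continuous g' := by
    simp only [hg'def]
    fun_prop
  -- chord estimates
  have hwhitL : ∀ s ∈ Icc (0:ℝ) (2*δ), |f s - (f 0 + B * s)| ≤ W2 := by
    have h0 := whitney_chord (f := f) (W := W2) (a := 0) (c := δ) hδ
      (hf.mono (fun y hy => ⟨by linarith [hy.1], by linarith [hy.2]⟩))
      hW2
      (fun t k hk1 hk2 hk3 hk4 => hmem2 t k hk1 hk2 ⟨by linarith, by linarith⟩
        ⟨by linarith, by linarith⟩)
    intro s hs
    have h1 := h0 s (by constructor <;> [linarith [hs.1]; linarith [hs.2]])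
    have e : f 0 + (f (0+2*δ) - f 0)/(2*δ) * (s - 0) = f 0 + B * s := by
      rw [hB]; norm_num
    rw [e] at h1; exact h1
  have hwhitR : ∀ s ∈ Icc (1-2*δ) (1:ℝ), |f s - (f 1 + B' * (s-1))| ≤ W2 := by
    have h0 := whitney_chord (f := f) (W := W2) (a := 1-2*δ) (c := δ) hδ
      (hf.mono (fun y hy => ⟨by linarith [hy.1], by linarith [hy.2]⟩))
      hW2
      (fun t k hk1 hk2 hk3 hk4 => hmem2 t k hk1 hk2 ⟨by linarith, by linarith⟩
        ⟨by linarith, by linarith⟩)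
    intro s hs
    have h1 := h0 s (by constructor <;> [linarith [hs.1]; linarith [hs.2]])
    have e : f (1-2*δ) + (f ((1-2*δ)+2*δ) - f (1-2*δ))/(2*δ) * (s - (1-2*δ))
        = f 1 + B' * (s-1) := by
      rw [show (1-2*δ)+2*δ = 1 by ring, hB']
      field_simp
      ring
    rw [e] at h1; exact h1
  have htri : ∀ u v : ℝ, |u - 2*v| ≤ |u| + 2*|v| := by
    intro u v
    calc |u - 2*v| ≤ |u| + |2*v| := abs_sub u (2*v)
    _ = |u| + 2*|v| := by rw [abs_mul, abs_two]
  -- pointwise second-difference bound for the extension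
  have hpsi : ∀ t ∈ Icc (0:ℝ) 1, ∀ w ∈ Icc (0:ℝ) δ,
      |fext (t+w) + fext (t-w) - 2*f t| ≤ 3*W2 := by
    rintro t ⟨ht0, ht1⟩ w ⟨hw0, hwδ⟩
    rcases eq_or_lt_of_le hw0 with hw0' | hw0'
    · rw [← hw0', add_zero, sub_zero, hfeq t ⟨ht0, ht1⟩,
        show f t + f t - 2*f t = 0 by ring]
      simpa using by positivity
    rcases lt_or_ge (t - w) 0 with hneg | hnn
    · have e1 : fext (t+w) = f (t+w) := hfeq _ ⟨by linarith, by linarith⟩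
      have e2 : fext (t-w) = f 0 + B * (t-w) := hfneg _ (by linarith)
      have k1 := hwhitL (t+w) ⟨by linarith, by linarith⟩
      have k2 := hwhitL t ⟨ht0, by linarith⟩
      have e3 : fext (t+w) + fext (t-w) - 2*f t
          = (f (t+w) - (f 0 + B*(t+w))) - 2*(f t - (f 0 + B*t)) := by
        rw [e1, e2]; ring
      rw [e3]
      calc |(f (t+w) - (f 0 + B*(t+w))) - 2*(f t - (f 0 + B*t))|
          ≤ |f (t+w) - (f 0 + B*(t+w))| + 2*|f t - (f 0 + B*t)| := htri _ _
      _ ≤ W2 + 2*W2 := by gcongr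
      _ = 3*W2 := by ring
    rcases le_or_gt (t + w) 1 with hle | hgt
    · rw [hfeq _ ⟨by linarith, hle⟩, hfeq _ ⟨hnn, by linarith⟩]
      have := hmem2 t w hw0' hwδ ⟨hnn, by linarith⟩ ⟨by linarith, hle⟩
      rw [show f (t+w) + f (t-w) - 2*f t = f (t+w) - 2*f t + f (t-w) by ring]
      linarith
    · have e1 : fext (t+w) = f 1 + B' * (t+w-1) := hfpos _ (by linarith)
      have e2 : fext (t-w) = f (t-w) := hfeq _ ⟨hnn, by linarith⟩
      have k1 := hwhitR (t-w) ⟨by linarith, by linarith⟩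
      have k2 := hwhitR t ⟨by linarith, ht1⟩
      have e3 : fext (t+w) + fext (t-w) - 2*f t
          = (f (t-w) - (f 1 + B'*(t-w-1))) - 2*(f t - (f 1 + B'*(t-1))) := by
        rw [e1, e2]; ring
      rw [e3]
      calc |(f (t-w) - (f 1 + B'*(t-w-1))) - 2*(f t - (f 1 + B'*(t-1)))|
          ≤ |f (t-w) - (f 1 + B'*(t-w-1))| + 2*|f t - (f 1 + B'*(t-1))| := htri _ _
      _ ≤ W2 + 2*W2 := by gcongr
      _ = 3*W2 := by ring
  -- error bound
  have herr : ∀ t ∈ Icc (0:ℝ) 1, |f t - g t| ≤ 3/2 * W2 := by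
    intro t ht
    have hΨderiv : ∀ w : ℝ, HasDerivAt (fun w => F (t+w) - F (t-w) - 2*w*(f t))
        (fext (t+w) + fext (t-w) - 2*(f t)) w := by
      intro w
      have h1 : HasDerivAt (fun w => F (t+w)) (fext (t+w)) w := by
        simpa [Function.comp_def] using (hFderiv (t+w)).comp w ((hasDerivAt_id w).const_add t)
      have h2 : HasDerivAt (fun w => F (t-w)) (-fext (t-w)) w := by
        simpa [Function.comp_def] using (hFderiv (t-w)).comp w ((hasDerivAt_const w t).sub (hasDerivAt_id w))
      have h3 : HasDerivAt (fun w : ℝ => 2*w*(f t)) (2*(f t)) w := by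
        simpa using ((hasDerivAt_id w).const_mul 2).mul_const (f t)
      have h4 : HasDerivAt (fun w => F (t+w) - F (t-w) - 2*w*(f t))
          (fext (t+w) - -fext (t-w) - 2*(f t)) w := (h1.sub h2).sub h3
      convert h4 using 1
      ring
    have hψc : Continuous (fun w => fext (t+w) + fext (t-w) - 2*(f t)) := by fun_prop
    have key := intervalIntegral.integral_mul_deriv_eq_deriv_mul
      (a := (0:ℝ)) (b := δ)
      (u := fun w => δ - w) (u' := fun _ => (-1:ℝ))
      (v := fun w => F (t+w) - F (t-w) - 2*w*(f t))
      (v' := fun w => fext (t+w) + fext (t-w) - 2*(f t))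
      (fun w _ => by simpa using (hasDerivAt_id' w).const_sub δ)
      (fun w _ => hΨderiv w)
      (continuous_const.intervalIntegrable _ _)
      (hψc.intervalIntegrable _ _)
    have hΨ0 : F (t+0) - F (t-0) - 2*0*(f t) = 0 := by norm_num
    have hΨcont : Continuous (fun w => F (t+w) - F (t-w) - 2*w*(f t)) := by fun_prop
    have hneg1 : ∫ w in (0:ℝ)..δ, (-1)*(F (t+w) - F (t-w) - 2*w*(f t))
        = -(∫ w in (0:ℝ)..δ, (F (t+w) - F (t-w) - 2*w*(f t))) := by
      rw [intervalIntegral.integral_const_mul]; ring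
    rw [hΨ0, hneg1] at key
    -- evaluate ∫ Ψ
    have hFint : ∀ a b : ℝ, IntervalIntegrable F volume a b := fun a b => hFc.intervalIntegrable _ _
    have hA : ∫ w in (0:ℝ)..δ, F (t+w) = G (t+δ) - G t := by
      rw [intervalIntegral.integral_comp_add_left F t]
      rw [hGdef]
      simp only [add_zero]
      exact (intervalIntegral.integral_interval_sub_left (hFint 0 (t+δ)) (hFint 0 t)).symm
    have hA2 : ∫ w in (0:ℝ)..δ, F (t-w) = G t - G (t-δ) := by
      rw [intervalIntegral.integral_comp_sub_left F t]
      rw [hGdef]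
      simp only [sub_zero]
      exact (intervalIntegral.integral_interval_sub_left (hFint 0 t) (hFint 0 (t-δ))).symm
    have hA3 : ∫ w in (0:ℝ)..δ, 2*w*(f t) = δ^2 * f t := by
      have : (fun w : ℝ => 2*w*(f t)) = fun w : ℝ => (2*(f t))*w := by funext w; ring
      rw [this, intervalIntegral.integral_const_mul, integral_id]
      ring
    have hΨval : ∫ w in (0:ℝ)..δ, (F (t+w) - F (t-w) - 2*w*(f t))
        = δ^2 * (g t - f t) := by
      have i1 : IntervalIntegrable (fun w => F (t+w)) volume 0 δ := by
        apply Continuous.intervalIntegrable; fun_prop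
      have i2 : IntervalIntegrable (fun w => F (t-w)) volume 0 δ := by
        apply Continuous.intervalIntegrable; fun_prop
      have i3 : IntervalIntegrable (fun w : ℝ => 2*w*(f t)) volume 0 δ := by
        apply Continuous.intervalIntegrable; fun_prop
      rw [intervalIntegral.integral_sub (i1.sub i2) i3, intervalIntegral.integral_sub i1 i2,
        hA, hA2, hA3, hgdef]
      field_simp
      ring
    rw [hΨval] at key
    -- key : ∫ w in 0..δ, (δ-w)*ψ w = (δ-δ)*Ψδ - (δ-0)*0 - (-(δ²(g-f)))
    have hkey2 : ∫ w in (0:ℝ)..δ, (δ-w)*(fext (t+w) + fext (t-w) - 2*(f t))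
        = δ^2 * (g t - f t) := by
      rw [key]; ring
    -- bound the integral
    have hb1 : |∫ w in (0:ℝ)..δ, (δ-w)*(fext (t+w) + fext (t-w) - 2*(f t))|
        ≤ 3/2 * W2 * δ^2 := by
      have h1 := intervalIntegral.abs_integral_le_integral_abs (μ := volume)
        (f := fun w => (δ-w)*(fext (t+w) + fext (t-w) - 2*(f t))) (le_of_lt hδ)
      have h2 : ∫ w in (0:ℝ)..δ, |(δ-w)*(fext (t+w) + fext (t-w) - 2*(f t))|
          ≤ ∫ w in (0:ℝ)..δ, (δ-w)*(3*W2) := by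
        apply intervalIntegral.integral_mono_on (le_of_lt hδ)
        · apply Continuous.intervalIntegrable
          have : Continuous (fun w => (δ-w)*(fext (t+w) + fext (t-w) - 2*(f t))) := by fun_prop
          exact this.abs
        · apply Continuous.intervalIntegrable; fun_prop
        · intro w hw
          rw [abs_mul, abs_of_nonneg (by linarith [hw.2] : (0:ℝ) ≤ δ - w)]
          apply mul_le_mul_of_nonneg_left _ (by linarith [hw.2])
          exact hpsi t ht w hw
      have h3 : ∫ w in (0:ℝ)..δ, (δ-w)*(3*W2) = 3/2 * W2 * δ^2 := by
        rw [intervalIntegral.integral_mul_const]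
        have i1 : IntervalIntegrable (fun _ : ℝ => δ) volume 0 δ := intervalIntegrable_const
        have i2 : IntervalIntegrable (fun w : ℝ => w) volume 0 δ :=
          intervalIntegral.intervalIntegrable_id
        have : ∫ w in (0:ℝ)..δ, (δ-w) = δ^2/2 := by
          rw [intervalIntegral.integral_sub i1 i2, integral_id, intervalIntegral.integral_const,
            smul_eq_mul]
          ring
        rw [this]; ring
      linarith
    rw [hkey2] at hb1
    rw [abs_mul, abs_of_pos (by positivity : (0:ℝ) < δ^2)] at hb1
    have hd : (0:ℝ) < δ^2 := pow_pos hδ 2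
    have : |f t - g t| = |g t - f t| := abs_sub_comm _ _
    rw [this]
    calc |g t - f t| = (δ^2 * |g t - f t|)/δ^2 := by field_simp
    _ ≤ (3/2*W2*δ^2)/δ^2 := (div_le_div_iff_of_pos_right hd).mpr hb1
    _ = 3/2*W2 := by rw [mul_div_cancel_right₀ _ (ne_of_gt hd)]
  -- slope bounds
  have habs2W1 : ∀ u v : ℝ, u ∈ Icc (0:ℝ) 1 → v ∈ Icc (0:ℝ) 1 → |u - v| ≤ δ → |f u - f v| ≤ W1 :=
    hmem1
  have hBabs : |B| ≤ W1/δ := by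
    have h1 := hmem1 (2*δ) δ ⟨by linarith, by linarith⟩ ⟨by linarith, by linarith⟩
      (by rw [show 2*δ - δ = δ by ring, abs_of_pos hδ])
    have h2 := hmem1 δ 0 ⟨by linarith, by linarith⟩ ⟨le_refl 0, by linarith⟩
      (by rw [sub_zero, abs_of_pos hδ])
    have h3 : |f (2*δ) - f 0| ≤ 2*W1 := by
      calc |f (2*δ) - f 0| = |(f (2*δ) - f δ) + (f δ - f 0)| := by ring_nf
      _ ≤ |f (2*δ) - f δ| + |f δ - f 0| := abs_add_le _ _
      _ ≤ W1 + W1 := add_le_add h1 h2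
      _ = 2*W1 := by ring
    rw [hB, abs_div, abs_of_pos (by positivity : (0:ℝ) < 2*δ), div_le_div_iff₀ (by positivity) hδ]
    nlinarith
  have hB'abs : |B'| ≤ W1/δ := by
    have h1 := hmem1 1 (1-δ) ⟨by linarith, le_refl 1⟩ ⟨by linarith, by linarith⟩
      (by rw [show 1 - (1-δ) = δ by ring, abs_of_pos hδ])
    have h2 := hmem1 (1-δ) (1-2*δ) ⟨by linarith, by linarith⟩ ⟨by linarith, by linarith⟩
      (by rw [show (1-δ) - (1-2*δ) = δ by ring, abs_of_pos hδ])
    have h3 : |f 1 - f (1-2*δ)| ≤ 2*W1 := by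
      calc |f 1 - f (1-2*δ)| = |(f 1 - f (1-δ)) + (f (1-δ) - f (1-2*δ))| := by ring_nf
      _ ≤ |f 1 - f (1-δ)| + |f (1-δ) - f (1-2*δ)| := abs_add_le _ _
      _ ≤ W1 + W1 := add_le_add h1 h2
      _ = 2*W1 := by ring
    rw [hB', abs_div, abs_of_pos (by positivity : (0:ℝ) < 2*δ), div_le_div_iff₀ (by positivity) hδ]
    nlinarith
  -- first-difference bound for the extension
  have hext1 : ∀ s : ℝ, 0 ≤ s → s ≤ 1 + δ → |fext s - fext (s-δ)| ≤ 2*W1 := by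
    intro s hs0 hs1
    rcases lt_or_ge (s - δ) 0 with hneg | hnn
    · have e1 : fext s = f s := hfeq _ ⟨hs0, by linarith⟩
      have e2 : fext (s-δ) = f 0 + B * (s-δ) := hfneg _ (by linarith)
      have k1 := hmem1 s 0 ⟨hs0, by linarith⟩ ⟨le_refl 0, by linarith⟩
        (by rw [sub_zero, abs_of_nonneg hs0]; linarith)
      have k2 : |B * (s-δ)| ≤ W1 := by
        rw [abs_mul]
        have : |s - δ| ≤ δ := by rw [abs_le]; constructor <;> linarith
        calc |B| * |s-δ| ≤ (W1/δ) * δ :=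
          mul_le_mul hBabs this (abs_nonneg _) (by positivity)
        _ = W1 := by field_simp
      calc |fext s - fext (s-δ)| = |(f s - f 0) - B*(s-δ)| := by rw [e1, e2]; ring_nf
      _ ≤ |f s - f 0| + |B*(s-δ)| := abs_sub _ _
      _ ≤ W1 + W1 := add_le_add k1 k2
      _ = 2*W1 := by ring
    rcases le_or_gt s 1 with hle | hgt
    · rw [hfeq _ ⟨hs0, hle⟩, hfeq _ ⟨hnn, by linarith⟩]
      have := hmem1 s (s-δ) ⟨hs0, hle⟩ ⟨hnn, by linarith⟩
        (by rw [show s - (s-δ) = δ by ring, abs_of_pos hδ])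
      linarith
    · have e1 : fext s = f 1 + B' * (s-1) := hfpos _ (by linarith)
      have e2 : fext (s-δ) = f (s-δ) := hfeq _ ⟨hnn, by linarith⟩
      have k1 := hmem1 1 (s-δ) ⟨by linarith, le_refl 1⟩ ⟨hnn, by linarith⟩
        (by rw [abs_le]; constructor <;> linarith)
      have k2 : |B' * (s-1)| ≤ W1 := by
        rw [abs_mul]
        have : |s - 1| ≤ δ := by rw [abs_le]; constructor <;> linarith
        calc |B'| * |s-1| ≤ (W1/δ) * δ :=
          mul_le_mul hB'abs this (abs_nonneg _) (by positivity)
        _ = W1 := by field_simp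
      calc |fext s - fext (s-δ)| = |(f 1 - f (s-δ)) + B'*(s-1)| := by rw [e1, e2]; ring_nf
      _ ≤ |f 1 - f (s-δ)| + |B'*(s-1)| := abs_add_le _ _
      _ ≤ W1 + W1 := add_le_add k1 k2
      _ = 2*W1 := by ring
  -- derivative bound
  have hder : ∀ t ∈ Icc (0:ℝ) 1, |g' t| ≤ 2*W1/δ := by
    rintro t ⟨ht0, ht1⟩
    have hfextint : ∀ a b : ℝ, IntervalIntegrable fext volume a b :=
      fun a b => hfextc.intervalIntegrable _ _
    have h1 : F (t+δ) - F t = ∫ s in t..(t+δ), fext s := by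
      simp only [hFdef]
      exact intervalIntegral.integral_interval_sub_left (hfextint 0 (t+δ)) (hfextint 0 t)
    have h2 : F t - F (t-δ) = ∫ s in (t-δ)..t, fext s := by
      simp only [hFdef]
      exact intervalIntegral.integral_interval_sub_left (hfextint 0 t) (hfextint 0 (t-δ))
    have h3 : ∫ s in (t-δ)..t, fext s = ∫ s in t..(t+δ), fext (s-δ) := by
      rw [intervalIntegral.integral_comp_sub_right fext δ]
      norm_num
    have hval : g' t = (∫ s in t..(t+δ), (fext s - fext (s-δ)))/δ^2 := by
      rw [hg'def]
      congr 1
      rw [intervalIntegral.integral_sub (hfextint t (t+δ)) (by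
        have : IntervalIntegrable (fun s => fext (s-δ)) volume t (t+δ) := by
          apply Continuous.intervalIntegrable; fun_prop
        exact this)]
      rw [← h1, ← h3, ← h2]
      ring
    have hb : |∫ s in t..(t+δ), (fext s - fext (s-δ))| ≤ 2*W1*δ := by
      have ha := intervalIntegral.abs_integral_le_integral_abs (μ := volume)
        (f := fun s => fext s - fext (s-δ)) (by linarith : t ≤ t+δ)
      have hm : ∫ s in t..(t+δ), |fext s - fext (s-δ)| ≤ ∫ s in t..(t+δ), (2*W1) := by
        apply intervalIntegral.integral_mono_on (by linarith)
        · apply Continuous.intervalIntegrable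
          have : Continuous (fun s => fext s - fext (s-δ)) := by fun_prop
          exact this.abs
        · exact continuous_const.intervalIntegrable _ _
        · intro s hs
          exact hext1 s (by linarith [hs.1]) (by linarith [hs.2])
      have hc : ∫ s in t..(t+δ), (2*W1 : ℝ) = 2*W1*δ := by
        rw [intervalIntegral.integral_const, smul_eq_mul]
        ring
      linarith
    rw [hval, abs_div, abs_of_pos (by positivity : (0:ℝ) < δ^2)]
    rw [div_le_div_iff₀ (by positivity) hδ]
    calc |∫ s in t..(t+δ), (fext s - fext (s-δ))| * δ ≤ (2*W1*δ)*δ :=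
          mul_le_mul_of_nonneg_right hb (le_of_lt hδ)
    _ = 2*W1*δ^2 := by ring
  exact ⟨g, g', hgderiv, hg'c, herr, hder⟩

/-- Main quantitative bound on the central sum. -/
lemma Tbound {n : ℕ} (hn : 1 ≤ n) {f g g' : ℝ → ℝ} {x : ℝ} (hx : x ∈ Icc (0:ℝ) 1)
    (hf : ContinuousOn f (Icc 0 1)) (hgderiv : ∀ t, HasDerivAt g (g' t) t)
    (hg'c : Continuous g')
    {E D : ℝ} (hE : 0 ≤ E) (hD : 0 ≤ D)
    (herr : ∀ t ∈ Icc (0:ℝ) 1, |f t - g t| ≤ E)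
    (hder : ∀ t ∈ Icc (0:ℝ) 1, |g' t| ≤ D) :
    |((n:ℝ)+1) * ∑ j ∈ Finset.range n, bp (n-1) j x *
        ((∫ t in (0:ℝ)..1, bp n (j+1) t * f t) - ∫ t in (0:ℝ)..1, bp n j t * f t)|
      ≤ 2*E + D/((n:ℝ)+2) := by
  have hgc : Continuous g := by
    have : Differentiable ℝ g := fun t => (hgderiv t).differentiableAt
    exact this.continuous
  have hfg : ContinuousOn (fun t => f t - g t) (Icc 0 1) := hf.sub hgc.continuousOn
  have huIcc : Set.uIcc (0:ℝ) 1 = Icc 0 1 := uIcc_of_le (by norm_num)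
  have hintfg : ∀ k : ℕ, IntervalIntegrable (fun t => bp n k t * (f t - g t)) volume 0 1 := by
    intro k
    apply ContinuousOn.intervalIntegrable
    rw [huIcc]
    exact (bp_continuous n k).continuousOn.mul hfg
  have hintg : ∀ k : ℕ, IntervalIntegrable (fun t => bp n k t * g t) volume 0 1 :=
    fun k => ((bp_continuous n k).mul hgc).intervalIntegrable _ _
  have hsplit : ∀ k : ℕ, (∫ t in (0:ℝ)..1, bp n k t * f t)
      = (∫ t in (0:ℝ)..1, bp n k t * (f t - g t)) + ∫ t in (0:ℝ)..1, bp n k t * g t := by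
    intro k
    rw [← intervalIntegral.integral_add (hintfg k) (hintg k)]
    apply intervalIntegral.integral_congr
    intro t _
    ring
  have hAj : ∀ j ∈ Finset.range n,
      |(∫ t in (0:ℝ)..1, bp n (j+1) t * f t) - ∫ t in (0:ℝ)..1, bp n j t * f t|
        ≤ 2*E/((n:ℝ)+1) + D/(((n:ℝ)+1)*((n:ℝ)+2)) := by
    intro j hj
    rw [Finset.mem_range] at hj
    have hj1 : j + 1 ≤ n := hj
    have hparts := bp_parts (m := n) (k := j) hj1 hgderiv hg'c
    have hYdiff : (∫ t in (0:ℝ)..1, bp n (j+1) t * g t) - ∫ t in (0:ℝ)..1, bp n j t * g t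
        = (1/((n:ℝ)+1)) * ∫ t in (0:ℝ)..1, bp (n+1) (j+1) t * g' t := by
      rw [← hparts, ← intervalIntegral.integral_sub (hintg (j+1)) (hintg j)]
      apply intervalIntegral.integral_congr
      intro t _
      ring
    have hfinal : (∫ t in (0:ℝ)..1, bp n (j+1) t * f t) - ∫ t in (0:ℝ)..1, bp n j t * f t
        = ((∫ t in (0:ℝ)..1, bp n (j+1) t * (f t - g t))
            - ∫ t in (0:ℝ)..1, bp n j t * (f t - g t))
          + (1/((n:ℝ)+1)) * ∫ t in (0:ℝ)..1, bp (n+1) (j+1) t * g' t := by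
      rw [hsplit (j+1), hsplit j]
      linear_combination hYdiff
    rw [hfinal]
    have hb1 := integral_bp_mul_le (show j+1 ≤ n from hj1) hfg herr
    have hb2 := integral_bp_mul_le (show j ≤ n by omega) hfg herr
    have hb3 := integral_bp_mul_le (show j+1 ≤ n+1 by omega) hg'c.continuousOn hder
    have hcast : ((n+1:ℕ):ℝ) + 1 = (n:ℝ) + 2 := by push_cast; ring
    rw [hcast] at hb3
    have step1 : |((∫ t in (0:ℝ)..1, bp n (j+1) t * (f t - g t))
            - ∫ t in (0:ℝ)..1, bp n j t * (f t - g t))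
          + (1/((n:ℝ)+1)) * ∫ t in (0:ℝ)..1, bp (n+1) (j+1) t * g' t|
        ≤ |(∫ t in (0:ℝ)..1, bp n (j+1) t * (f t - g t))
            - ∫ t in (0:ℝ)..1, bp n j t * (f t - g t)|
          + |(1/((n:ℝ)+1)) * ∫ t in (0:ℝ)..1, bp (n+1) (j+1) t * g' t| := abs_add_le _ _
    have step2 : |(∫ t in (0:ℝ)..1, bp n (j+1) t * (f t - g t))
            - ∫ t in (0:ℝ)..1, bp n j t * (f t - g t)|
        ≤ |∫ t in (0:ℝ)..1, bp n (j+1) t * (f t - g t)|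
          + |∫ t in (0:ℝ)..1, bp n j t * (f t - g t)| := abs_sub _ _
    have step3 : |(1/((n:ℝ)+1)) * ∫ t in (0:ℝ)..1, bp (n+1) (j+1) t * g' t|
        ≤ (1/((n:ℝ)+1)) * (D/((n:ℝ)+2)) := by
      rw [abs_mul, abs_of_pos (by positivity : (0:ℝ) < 1/((n:ℝ)+1))]
      exact mul_le_mul_of_nonneg_left hb3 (by positivity)
    have heq : E/((n:ℝ)+1) + E/((n:ℝ)+1) + (1/((n:ℝ)+1)) * (D/((n:ℝ)+2))
        = 2*E/((n:ℝ)+1) + D/(((n:ℝ)+1)*((n:ℝ)+2)) := by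
      field_simp
      ring
    linarith
  have hsum1 : ∑ j ∈ Finset.range n, bp (n-1) j x = 1 := by
    have h := bp_sum (n-1) x
    rwa [show n - 1 + 1 = n by omega] at h
  have hb : |∑ j ∈ Finset.range n, bp (n-1) j x *
        ((∫ t in (0:ℝ)..1, bp n (j+1) t * f t) - ∫ t in (0:ℝ)..1, bp n j t * f t)|
      ≤ 2*E/((n:ℝ)+1) + D/(((n:ℝ)+1)*((n:ℝ)+2)) := by
    calc |∑ j ∈ Finset.range n, bp (n-1) j x *
          ((∫ t in (0:ℝ)..1, bp n (j+1) t * f t) - ∫ t in (0:ℝ)..1, bp n j t * f t)|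
        ≤ ∑ j ∈ Finset.range n, |bp (n-1) j x *
          ((∫ t in (0:ℝ)..1, bp n (j+1) t * f t) - ∫ t in (0:ℝ)..1, bp n j t * f t)| :=
          Finset.abs_sum_le_sum_abs _ _
    _ ≤ ∑ j ∈ Finset.range n, bp (n-1) j x * (2*E/((n:ℝ)+1) + D/(((n:ℝ)+1)*((n:ℝ)+2))) := by
          apply Finset.sum_le_sum
          intro j hj
          rw [abs_mul, abs_of_nonneg (bp_nonneg hx)]
          exact mul_le_mul_of_nonneg_left (hAj j hj) (bp_nonneg hx)
    _ = 2*E/((n:ℝ)+1) + D/(((n:ℝ)+1)*((n:ℝ)+2)) := by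
          rw [← Finset.sum_mul, hsum1, one_mul]
  rw [abs_mul, abs_of_pos (by positivity : (0:ℝ) < (n:ℝ)+1)]
  calc ((n:ℝ)+1) * |∑ j ∈ Finset.range n, bp (n-1) j x *
        ((∫ t in (0:ℝ)..1, bp n (j+1) t * f t) - ∫ t in (0:ℝ)..1, bp n j t * f t)|
      ≤ ((n:ℝ)+1) * (2*E/((n:ℝ)+1) + D/(((n:ℝ)+1)*((n:ℝ)+2))) :=
        mul_le_mul_of_nonneg_left hb (by positivity)
  _ = 2*E + D/((n:ℝ)+2) := by
        field_simp

/-- pointwise estimate for the modified Durrmeyer operator `D_n^{M,1}`. -/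
theorem stmt13 (n : ℕ) (hn : 1 ≤ n) (a0 a1 : ℝ) (ha : 2 * a0 + a1 = 1)
    (f : ℝ → ℝ) (hf : ContinuousOn f (Icc 0 1)) (x : ℝ) (hx : x ∈ Icc (0:ℝ) 1)
    (σ : ℝ)
    (hσ : σ = (2 * x * (1 - x) * ((n : ℝ) - 1) * ((n : ℝ) - 2) + 3 * (n : ℝ) + 1) /
      (2 * ((n : ℝ) + 2) ^ 2 * ((n : ℝ) + 3))) :
    |DurM1 a0 a1 n f x - f x| ≤
      |Dur n f x - f x| + |(1 + a1) * (1 / 2 - x)| *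
        (3 * omega2 f (Real.sqrt σ)
          + 5 / (((n : ℝ) + 2) * Real.sqrt σ) * omega1 f (Real.sqrt σ)) := by
  have hn1 : (1:ℝ) ≤ n := by exact_mod_cast hn
  obtain ⟨hx0, hx1⟩ := hx
  have hprod : 0 ≤ ((n:ℝ)-1)*((n:ℝ)-2) := by
    rcases Nat.lt_or_ge n 2 with h2 | h2
    · have : n = 1 := by omega
      subst this; norm_num
    · have : (2:ℝ) ≤ n := by exact_mod_cast h2
      nlinarith
  have hσpos : 0 < σ := by
    rw [hσ]
    apply div_pos
    · nlinarith [mul_nonneg (mul_nonneg (by linarith : (0:ℝ) ≤ 2*x)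
        (by linarith : (0:ℝ) ≤ 1-x)) hprod]
    · positivity
  have hσle : σ ≤ 1/18 := by
    rw [hσ, div_le_iff₀ (by positivity)]
    have hstep : 2*x*(1-x)*(((n:ℝ)-1)*((n:ℝ)-2)) ≤ (1/2)*(((n:ℝ)-1)*((n:ℝ)-2)) := by
      have hq : 2*x*(1-x) ≤ 1/2 := by nlinarith [sq_nonneg (x-1/2)]
      exact mul_le_mul_of_nonneg_right hq hprod
    have hpoly : 0 ≤ ((n:ℝ)-1)*(2*(n:ℝ)^2+7*(n:ℝ)+12) :=
      mul_nonneg (by linarith) (by nlinarith)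
    nlinarith [hstep, hpoly]
  set δ := Real.sqrt σ with hδdef
  have hδpos : 0 < δ := Real.sqrt_pos.mpr hσpos
  have hδsq : δ^2 = σ := Real.sq_sqrt (le_of_lt hσpos)
  have hδ2 : 2*δ ≤ 1 := by
    have hδsq18 : δ^2 ≤ 1/18 := by rw [hδsq]; exact hσle
    nlinarith [hδsq18, hδpos]
  -- boundedness of f and moduli facts
  obtain ⟨C, hCn⟩ := isCompact_Icc.exists_bound_of_continuousOn hf
  have hC : ∀ y ∈ Icc (0:ℝ) 1, |f y| ≤ C := fun y hy => by
    simpa [Real.norm_eq_abs] using hCn y hy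
  have hbdd1 : BddAbove {y | ∃ s t : ℝ, s ∈ Icc (0:ℝ) 1 ∧ t ∈ Icc (0:ℝ) 1 ∧ |s - t| ≤ δ ∧
      y = |f s - f t|} := by
    refine ⟨2*C, ?_⟩
    rintro y ⟨s, t, hs, ht, _, rfl⟩
    calc |f s - f t| ≤ |f s| + |f t| := abs_sub _ _
    _ ≤ C + C := add_le_add (hC s hs) (hC t ht)
    _ = 2*C := by ring
  have hbdd2 : BddAbove {y | ∃ t h : ℝ, 0 < h ∧ h ≤ δ ∧ t - h ∈ Icc (0:ℝ) 1 ∧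
      t + h ∈ Icc (0:ℝ) 1 ∧ y = |f (t + h) - 2 * f t + f (t - h)|} := by
    refine ⟨4*C, ?_⟩
    rintro y ⟨t, k, hk0, hkδ, h1, h2, rfl⟩
    have htm : t ∈ Icc (0:ℝ) 1 := ⟨by linarith [h1.1], by linarith [h2.2]⟩
    have e1 := abs_add_le (f (t+k) - 2*f t) (f (t-k))
    have e2 := abs_sub (f (t+k)) (2*f t)
    rw [abs_mul, abs_two] at e2
    have b1 := hC (t+k) h2
    have b2 := hC t htm
    have b3 := hC (t-k) h1
    linarith
  have hmem1 : ∀ s t : ℝ, s ∈ Icc (0:ℝ) 1 → t ∈ Icc (0:ℝ) 1 → |s - t| ≤ δ →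
      |f s - f t| ≤ omega1 f δ :=
    fun s t hs ht hst => le_csSup hbdd1 ⟨s, t, hs, ht, hst, rfl⟩
  have hmem2 : ∀ t k : ℝ, 0 < k → k ≤ δ → t - k ∈ Icc (0:ℝ) 1 → t + k ∈ Icc (0:ℝ) 1 →
      |f (t+k) - 2*f t + f (t-k)| ≤ omega2 f δ :=
    fun t k h1 h2 h3 h4 => le_csSup hbdd2 ⟨t, k, h1, h2, h3, h4, rfl⟩
  have hW1 : 0 ≤ omega1 f δ := by
    have := hmem1 0 0 ⟨le_refl 0, by norm_num⟩ ⟨le_refl 0, by norm_num⟩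
      (by simpa using le_of_lt hδpos)
    linarith [abs_nonneg (f 0 - f 0)]
  have hW2 : 0 ≤ omega2 f δ := by
    have := hmem2 δ δ hδpos (le_refl δ)
      (by constructor <;> [linarith; linarith])
      (by constructor <;> [linarith; linarith])
    linarith [abs_nonneg (f (δ+δ) - 2*f δ + f (δ-δ))]
  -- smoothing
  obtain ⟨g, g', hgderiv, hg'c, herr, hder⟩ :=
    exists_smooth_approx hf hδpos hδ2 hW1 hW2 hmem1 hmem2
  -- operator identity
  have hdiffk : ∀ k ∈ Finset.range (n+1), bpM1 a0 a1 n k x - bp n k x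
      = ((1+a1)*(1/2-x)) * (bpz (n-1) ((k:ℤ)-1) x - bp (n-1) k x) := by
    intro k hk
    rw [Finset.mem_range] at hk
    have hp := bp_pascal hn (by omega : k ≤ n) x
    have ha0 : a0 = (1 - a1)/2 := by linarith
    simp only [bpM1]
    rw [hp, ha0]
    ring
  have hshift : ∑ k ∈ Finset.range (n+1),
        bpz (n-1) ((k:ℤ)-1) x * (∫ t in (0:ℝ)..1, bp n k t * f t)
      = ∑ j ∈ Finset.range n, bp (n-1) j x * (∫ t in (0:ℝ)..1, bp n (j+1) t * f t) := by
    rw [Finset.sum_range_succ']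
    have h0 : bpz (n-1) (((0:ℕ):ℤ) - 1) x * (∫ t in (0:ℝ)..1, bp n 0 t * f t) = 0 := by
      norm_num [bpz]
    rw [h0, add_zero]
    apply Finset.sum_congr rfl
    intro j _
    congr 1
    have he : ((j+1:ℕ):ℤ) - 1 = (j:ℤ) := by push_cast; ring
    rw [he]
    simp [bpz]
  have hlast : ∑ k ∈ Finset.range (n+1),
        bp (n-1) k x * (∫ t in (0:ℝ)..1, bp n k t * f t)
      = ∑ j ∈ Finset.range n, bp (n-1) j x * (∫ t in (0:ℝ)..1, bp n j t * f t) := by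
    rw [Finset.sum_range_succ]
    have hz : bp (n-1) n x = 0 := by
      simp [bp, Nat.choose_eq_zero_of_lt (show n-1 < n by omega)]
    rw [hz, zero_mul, add_zero]
  have hopident : DurM1 a0 a1 n f x - Dur n f x
      = ((1+a1)*(1/2-x)) * (((n:ℝ)+1) * ∑ j ∈ Finset.range n, bp (n-1) j x *
          ((∫ t in (0:ℝ)..1, bp n (j+1) t * f t) - ∫ t in (0:ℝ)..1, bp n j t * f t)) := by
    rw [DurM1, Dur, ← mul_sub, ← Finset.sum_sub_distrib]
    have hmid : ∑ k ∈ Finset.range (n+1),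
          (bpM1 a0 a1 n k x * (∫ t in (0:ℝ)..1, bp n k t * f t)
            - bp n k x * (∫ t in (0:ℝ)..1, bp n k t * f t))
        = ((1+a1)*(1/2-x)) * ∑ k ∈ Finset.range (n+1),
            (bpz (n-1) ((k:ℤ)-1) x * (∫ t in (0:ℝ)..1, bp n k t * f t)
              - bp (n-1) k x * (∫ t in (0:ℝ)..1, bp n k t * f t)) := by
      rw [Finset.mul_sum]
      apply Finset.sum_congr rfl
      intro k hk
      have := hdiffk k hk
      linear_combination (∫ t in (0:ℝ)..1, bp n k t * f t) * this
    rw [hmid, Finset.sum_sub_distrib, hshift, hlast]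
    have hcomb : (∑ j ∈ Finset.range n, bp (n-1) j x * (∫ t in (0:ℝ)..1, bp n (j+1) t * f t))
        - ∑ j ∈ Finset.range n, bp (n-1) j x * (∫ t in (0:ℝ)..1, bp n j t * f t)
        = ∑ j ∈ Finset.range n, bp (n-1) j x *
            ((∫ t in (0:ℝ)..1, bp n (j+1) t * f t) - ∫ t in (0:ℝ)..1, bp n j t * f t) := by
      rw [← Finset.sum_sub_distrib]
      apply Finset.sum_congr rfl
      intro j _
      ring
    rw [hcomb]
    ring
  -- the T bound
  have hT := Tbound hn ⟨hx0, hx1⟩ hf hgderiv hg'c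
    (by positivity : (0:ℝ) ≤ 3/2 * omega2 f δ)
    (by positivity : (0:ℝ) ≤ 2*omega1 f δ/δ) herr hder
  have hTle : |((n:ℝ)+1) * ∑ j ∈ Finset.range n, bp (n-1) j x *
        ((∫ t in (0:ℝ)..1, bp n (j+1) t * f t) - ∫ t in (0:ℝ)..1, bp n j t * f t)|
      ≤ 3 * omega2 f δ + 5/(((n:ℝ)+2)*δ) * omega1 f δ := by
    have h1 : 2*(3/2 * omega2 f δ) = 3 * omega2 f δ := by ring
    have h2 : (2*omega1 f δ/δ)/((n:ℝ)+2) ≤ 5/(((n:ℝ)+2)*δ) * omega1 f δ := by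
      rw [div_div, show 5/(((n:ℝ)+2)*δ) * omega1 f δ = 5*omega1 f δ/(((n:ℝ)+2)*δ) by ring,
        show δ*((n:ℝ)+2) = ((n:ℝ)+2)*δ by ring]
      gcongr
      linarith
    linarith [hT]
  -- final assembly
  have hsplit2 : DurM1 a0 a1 n f x - f x
      = (Dur n f x - f x) + (DurM1 a0 a1 n f x - Dur n f x) := by ring
  calc |DurM1 a0 a1 n f x - f x|
      = |(Dur n f x - f x) + (DurM1 a0 a1 n f x - Dur n f x)| := by rw [← hsplit2]
  _ ≤ |Dur n f x - f x| + |DurM1 a0 a1 n f x - Dur n f x| := abs_add_le _ _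
  _ ≤ |Dur n f x - f x| + |(1 + a1) * (1 / 2 - x)| *
        (3 * omega2 f δ + 5/(((n:ℝ)+2)*δ) * omega1 f δ) := by
      rw [hopident, abs_mul]
      have := mul_le_mul_of_nonneg_left hTle (abs_nonneg ((1+a1)*(1/2-x)))
      linarith
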